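/- Let (X,d) be a geodesic δ-hyperbolic space in which every geodesic triangle is δ'-thin, P ⊆ X finite, p₁ ∈ P, â a farthest point of P from p₁, b̂ a farthest point of P from â, and m̂ the midpoint of a geodesic [â,b̂]. For any q ∈ X, letting q' be a point of P farthest from q and m the point on [q,q'] at distance diam(P)/2 − δ from q', we have d(m, m̂) ≤ 3δ + 4δ'. -/

import Mathlib

noncomputable def gromovProd {X : Type*} [MetricSpace X] (t u v : X) : ℝ :=
  (dist u t + dist v t - dist u v) / 2

def IsDeltaHyperbolic (X : Type*) [MetricSpace X] (δ : ℝ) : Prop :=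
  ∀ t u v w : X, gromovProd t u w ≥ min (gromovProd t u v) (gromovProd t v w) - δ

/-- `γ` is a unit-speed geodesic from `a` to `b`, defined on `[0, dist a b]`. -/
def IsGeodesic {X : Type*} [MetricSpace X] (γ : ℝ → X) (a b : X) : Prop :=
  γ 0 = a ∧ γ (dist a b) = b ∧
    ∀ s ∈ Set.Icc (0 : ℝ) (dist a b), ∀ t ∈ Set.Icc (0 : ℝ) (dist a b),
      dist (γ s) (γ t) = |s - t|

/-- `X` is a geodesic space. -/
def GeodesicSpace (X : Type*) [MetricSpace X] : Prop :=
  ∀ a b : X, ∃ γ : ℝ → X, IsGeodesic γ a b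

/-- Every geodesic triangle of `X` is `δ'`-thin: points of two sides emanating from a
common vertex `t` that are identified under the comparison map to the tripod (i.e. at
equal arclength `ℓ ≤ (u|v)_t` from `t`) are at distance at most `δ'`. -/
def TrianglesThin (X : Type*) [MetricSpace X] (δ' : ℝ) : Prop :=
  ∀ (t u v : X) (γ₁ γ₂ : ℝ → X), IsGeodesic γ₁ t u → IsGeodesic γ₂ t v →
    ∀ ℓ : ℝ, 0 ≤ ℓ → ℓ ≤ gromovProd t u v → dist (γ₁ ℓ) (γ₂ ℓ) ≤ δ'

lemma geodesic_symm' {X : Type*} [MetricSpace X] {γ : ℝ → X} {a b : X}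
    (h : IsGeodesic γ a b) : IsGeodesic (fun s => γ (dist a b - s)) b a := by
  obtain ⟨h0, h1, hd⟩ := h
  refine ⟨by simpa using h1, ?_, ?_⟩
  · show γ (dist a b - dist b a) = a
    rw [dist_comm b a, sub_self]; exact h0
  · intro s hs t ht
    rw [dist_comm b a] at hs ht
    rw [Set.mem_Icc] at hs ht
    have h2 := hd (dist a b - s) (Set.mem_Icc.mpr ⟨by linarith [hs.2], by linarith [hs.1]⟩)
      (dist a b - t) (Set.mem_Icc.mpr ⟨by linarith [ht.2], by linarith [ht.1]⟩)
    show dist (γ (dist a b - s)) (γ (dist a b - t)) = |s - t|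
    rw [h2, show dist a b - s - (dist a b - t) = t - s by ring, abs_sub_comm]

/-- Key thinness fact: for any point `x` and geodesic from `a` to `b` with midpoint
`γ (dist a b / 2)`, we have `d(x, mid) + d(a,b)/2 - δ' ≤ max (d x a) (d x b)`. -/
lemma dist_mid_le {X : Type*} [MetricSpace X] {δ' : ℝ}
    (hgeo : GeodesicSpace X) (hthin : TrianglesThin X δ')
    (a b x : X) (γ : ℝ → X) (hγ : IsGeodesic γ a b) :
    dist x (γ (dist a b / 2)) + dist a b / 2 - δ' ≤ max (dist x a) (dist x b) := by
  have hab : (0:ℝ) ≤ dist a b := dist_nonneg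
  by_cases h : dist a b / 2 ≤ gromovProd a b x
  · obtain ⟨σ, hσ⟩ := hgeo a x
    have hGx : gromovProd a b x ≤ dist a x := by
      simp only [gromovProd]
      linarith [dist_triangle b x a, dist_comm x a]
    have ht := hthin a b x γ σ hγ hσ (dist a b / 2) (by linarith) h
    have h2 := hσ.2.2 (dist a b / 2) (Set.mem_Icc.mpr ⟨by linarith, by linarith⟩)
      (dist a x) (Set.mem_Icc.mpr ⟨dist_nonneg, le_rfl⟩)
    rw [hσ.2.1, abs_of_nonpos (by linarith), neg_sub] at h2
    have h3 := dist_triangle x (σ (dist a b / 2)) (γ (dist a b / 2))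
    have h4 : dist x (σ (dist a b / 2)) = dist (σ (dist a b / 2)) x := dist_comm _ _
    have h5 : dist (σ (dist a b / 2)) (γ (dist a b / 2))
        = dist (γ (dist a b / 2)) (σ (dist a b / 2)) := dist_comm _ _
    have h6 : dist x a = dist a x := dist_comm x a
    have : dist x (γ (dist a b / 2)) + dist a b / 2 - δ' ≤ dist x a := by linarith
    exact this.trans (le_max_left _ _)
  · obtain ⟨τ, hτ⟩ := hgeo b x
    have hsum : gromovProd a b x + gromovProd b a x = dist a b := by
      simp only [gromovProd, dist_comm a b, dist_comm x a, dist_comm x b]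
      ring
    have h' : dist a b / 2 ≤ gromovProd b a x := by
      have := not_le.mp h
      linarith
    have hγ' := geodesic_symm' hγ
    have hG'x : gromovProd b a x ≤ dist b x := by
      simp only [gromovProd]
      linarith [dist_triangle a x b, dist_comm x b]
    have ht := hthin b a x (fun s => γ (dist a b - s)) τ hγ' hτ (dist a b / 2)
      (by linarith) h'
    have hkey : (fun s => γ (dist a b - s)) (dist a b / 2) = γ (dist a b / 2) := by
      show γ (dist a b - dist a b / 2) = γ (dist a b / 2)
      congr 1; ring
    rw [show γ (dist a b - dist a b / 2) = γ (dist a b / 2) from hkey] at ht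
    have h2 := hτ.2.2 (dist a b / 2) (Set.mem_Icc.mpr ⟨by linarith, by linarith⟩)
      (dist b x) (Set.mem_Icc.mpr ⟨dist_nonneg, le_rfl⟩)
    rw [hτ.2.1, abs_of_nonpos (by linarith), neg_sub] at h2
    have h3 := dist_triangle x (τ (dist a b / 2)) (γ (dist a b / 2))
    have h4 : dist x (τ (dist a b / 2)) = dist (τ (dist a b / 2)) x := dist_comm _ _
    have h5 : dist (τ (dist a b / 2)) (γ (dist a b / 2))
        = dist (γ (dist a b / 2)) (τ (dist a b / 2)) := dist_comm _ _
    have h6 : dist x b = dist b x := dist_comm x b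
    have : dist x (γ (dist a b / 2)) + dist a b / 2 - δ' ≤ dist x b := by linarith
    exact this.trans (le_max_right _ _)

theorem near_approx_diametral_midpoint {X : Type*} [MetricSpace X] {δ δ' : ℝ}
    (hgeo : GeodesicSpace X) (hX : IsDeltaHyperbolic X δ) (hthin : TrianglesThin X δ')
    (P : Finset X) (astar bstar : X) (hastar : astar ∈ P) (hbstar : bstar ∈ P)
    (hdiam : ∀ p ∈ P, ∀ p' ∈ P, dist p p' ≤ dist astar bstar)
    (p₁ ahat bhat : X) (hp₁ : p₁ ∈ P) (hahat : ahat ∈ P) (hbhat : bhat ∈ P)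
    (hahat_far : ∀ p ∈ P, dist p₁ p ≤ dist p₁ ahat)
    (hbhat_far : ∀ p ∈ P, dist ahat p ≤ dist ahat bhat)
    (γhat : ℝ → X) (hγhat : IsGeodesic γhat ahat bhat)
    (mhat : X) (hmhat : mhat = γhat (dist ahat bhat / 2))
    (q q' : X) (hq' : q' ∈ P) (hfar : ∀ p ∈ P, dist q p ≤ dist q q')
    (γ : ℝ → X) (hγ : IsGeodesic γ q' q)
    (hnonneg : 0 ≤ dist astar bstar / 2 - δ)
    (hlen : dist astar bstar / 2 - δ ≤ dist q q')
    (m : X) (hm : m = γ (dist astar bstar / 2 - δ)) :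
    dist m mhat ≤ 3 * δ + 4 * δ' := by
  -- nonnegativity of δ and δ'
  have hδ : 0 ≤ δ := by
    have := hX p₁ p₁ p₁ p₁
    simp [gromovProd] at this
    linarith
  have hδ' : 0 ≤ δ' := by
    obtain ⟨γ₀, hγ₀⟩ := hgeo p₁ p₁
    have := hthin p₁ p₁ p₁ γ₀ γ₀ hγ₀ hγ₀ 0 le_rfl (by simp [gromovProd])
    simpa using this
  -- dist ahat bhat ≥ dist astar bstar - 2δ
  have hF1 : dist astar bstar - 2 * δ ≤ dist ahat bhat := by
    have h := hX p₁ astar ahat bstar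
    have h1 := hbhat_far astar hastar
    have h2 := hbhat_far bstar hbstar
    have h3 := hahat_far astar hastar
    have h4 := hahat_far bstar hbstar
    rcases min_cases (gromovProd p₁ astar ahat) (gromovProd p₁ ahat bstar) with
      ⟨heq, _⟩ | ⟨heq, _⟩ <;> rw [heq] at h <;> simp only [gromovProd, ge_iff_le] at h
    · linarith [dist_comm p₁ astar, dist_comm p₁ ahat, dist_comm p₁ bstar,
        dist_comm astar ahat]
    · linarith [dist_comm p₁ astar, dist_comm p₁ ahat, dist_comm p₁ bstar,
        dist_comm ahat bstar]
  have hdD : dist ahat bhat ≤ dist astar bstar := hdiam ahat hahat bhat hbhat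
  -- mid-point facts
  have hu : dist q' mhat + dist ahat bhat / 2 - δ' ≤ dist astar bstar := by
    have := dist_mid_le hgeo hthin ahat bhat q' γhat hγhat
    rw [← hmhat] at this
    exact this.trans (max_le (hdiam q' hq' ahat hahat) (hdiam q' hq' bhat hbhat))
  have hv : dist q mhat + dist ahat bhat / 2 - δ' ≤ dist q q' := by
    have := dist_mid_le hgeo hthin ahat bhat q γhat hγhat
    rw [← hmhat] at this
    exact this.trans (max_le (hfar ahat hahat) (hfar bhat hbhat))
  -- the Gromov product at q' of q and mhat
  set GP : ℝ := gromovProd q' q mhat with hGPdef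
  have hGPeq : GP = (dist q q' + dist mhat q' - dist q mhat) / 2 := rfl
  have hGP0 : 0 ≤ GP := by
    rw [hGPeq]
    linarith [dist_triangle q q' mhat, dist_comm q' mhat, dist_comm mhat q']
  have hGPm : GP ≤ dist q' mhat := by
    rw [hGPeq]
    linarith [dist_triangle q mhat q', dist_comm mhat q', dist_comm q' mhat]
  set L : ℝ := dist astar bstar / 2 - δ with hLdef
  set ℓ : ℝ := min L GP with hℓdef
  have hℓ0 : 0 ≤ ℓ := le_min hnonneg hGP0
  have hℓL : ℓ ≤ L := min_le_left _ _
  have hℓGP : ℓ ≤ GP := min_le_right _ _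
  have hq'q : dist q' q = dist q q' := dist_comm _ _
  clear_value ℓ L GP
  -- thinness at vertex q'
  obtain ⟨η, hη⟩ := hgeo q' mhat
  have ht := hthin q' q mhat γ η hγ hη ℓ hℓ0 (hGPdef ▸ hℓGP)
  -- dist m (γ ℓ) = L - ℓ
  have hdm : dist m (γ ℓ) = L - ℓ := by
    rw [hm]
    have := hγ.2.2 L (Set.mem_Icc.mpr ⟨hnonneg, by rw [hq'q]; exact hlen⟩)
      ℓ (Set.mem_Icc.mpr ⟨hℓ0, le_trans hℓL (by rw [hq'q]; exact hlen)⟩)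
    rw [this, abs_of_nonneg (by linarith)]
  -- dist (η ℓ) mhat = dist q' mhat - ℓ
  have hdη : dist (η ℓ) mhat = dist q' mhat - ℓ := by
    have := hη.2.2 ℓ (Set.mem_Icc.mpr ⟨hℓ0, le_trans hℓGP hGPm⟩)
      (dist q' mhat) (Set.mem_Icc.mpr ⟨dist_nonneg, le_rfl⟩)
    rw [hη.2.1] at this
    rw [this, abs_of_nonpos (by linarith [le_trans hℓGP hGPm]), neg_sub]
  have htotal : dist m mhat ≤ (L - ℓ) + δ' + (dist q' mhat - ℓ) := by
    calc dist m mhat ≤ dist m (γ ℓ) + dist (γ ℓ) (η ℓ) + dist (η ℓ) mhat :=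
          dist_triangle4 _ _ _ _
      _ ≤ (L - ℓ) + δ' + (dist q' mhat - ℓ) := by rw [hdm, hdη]; linarith
  rcases le_total L GP with hc | hc
  · -- ℓ = L
    have hℓeq : ℓ = L := by rw [hℓdef]; exact min_eq_left hc
    rw [hℓeq] at htotal
    -- dist q' mhat ≤ D - d̂/2 + δ', then bound ≤ 2δ + 2δ'
    have hb : dist m mhat ≤ 2*δ + 2*δ' := by linarith [hu, hF1, hLdef, hδ, hδ', htotal]
    linarith
  · -- ℓ = GP
    have hℓeq : ℓ = GP := by rw [hℓdef]; exact min_eq_right hc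
    rw [hℓeq, hGPeq] at htotal
    have hcm : dist mhat q' = dist q' mhat := dist_comm _ _
    linarith
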